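/- arXiv:2202.09165 — 3 statements merged into one kernel-verified Lean document; each statement's English description precedes it below -/
import Mathlib

section
/- Let Γ_ℓ ≤ O(d) be a group of orthogonal maps with ⋂_{γ ∈ Γ_ℓ} ker(I − γ) = {0}, and let x_1,…,x_d be a basis of ℝ^d. Then there exist indices n_1,…,n_d ∈ {1,…,d} and elements μ_1,…,μ_d ∈ Γ_ℓ such that ⋂_{i=1}^d {x ∈ ℝ^d : ((I − μ_i^{-1})x_{n_i}) · x = 0} = {0}. -/
/-- Let `Γ_ℓ` be a group of orthogonal maps of `ℝ^d` whose common fixed subspace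
`⋂_{γ ∈ Γ_ℓ} ker (I - γ)` is `{0}`, and let `x_1, …, x_d` be a basis.  Then one can
choose indices `n_1, …, n_d` and elements `μ_1, …, μ_d ∈ Γ_ℓ` so that the hyperplane
conditions `((I - μ_i⁻¹) x_{n_i}) ⬝ v = 0` for `i = 1, …, d` have only the trivial
common solution. -/
theorem exists_isometries_trivial_intersection {d : ℕ}
    (Γ : Subgroup (EuclideanSpace ℝ (Fin d) ≃ₗᵢ[ℝ] EuclideanSpace ℝ (Fin d)))
    (b : Module.Basis (Fin d) ℝ (EuclideanSpace ℝ (Fin d)))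
    (hΓ : (⋂ γ ∈ Γ, {v : EuclideanSpace ℝ (Fin d) | γ v = v}) = {0}) :
    ∃ (n : Fin d → Fin d) (μ : Fin d → Γ),
      (⋂ i : Fin d, {v : EuclideanSpace ℝ (Fin d) |
          inner ℝ (b (n i) - ((μ i)⁻¹ : Γ).1 (b (n i))) v = (0 : ℝ)}) = {0} := by
  classical
  set E := EuclideanSpace ℝ (Fin d)
  set S : Set E := {w | ∃ j : Fin d, ∃ γ : Γ, w = b j - (γ⁻¹ : Γ).1 (b j)} with hSdef
  -- Step 1: span S = ⊤
  have hspan : Submodule.span ℝ S = ⊤ := by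
    rw [← Submodule.orthogonal_eq_bot_iff, Submodule.eq_bot_iff]
    intro v hv
    rw [Submodule.mem_orthogonal] at hv
    have hfix : ∀ γ : Γ, (γ : E ≃ₗᵢ[ℝ] E) v = v := by
      intro γ
      refine (InnerProductSpace.ext_inner_left_basis b fun j => ?_).symm
      have h0 : (inner ℝ (b j - (γ⁻¹ : Γ).1 (b j)) v : ℝ) = 0 :=
        hv _ (Submodule.subset_span ⟨j, γ, rfl⟩)
      rw [inner_sub_left, sub_eq_zero] at h0
      have : (inner ℝ ((γ⁻¹ : Γ).1 (b j)) v : ℝ) =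
          inner ℝ (b j) ((γ : E ≃ₗᵢ[ℝ] E) v) := by
        rw [← ((γ : E ≃ₗᵢ[ℝ] E)).inner_map_map ((γ⁻¹ : Γ).1 (b j)) v]
        congr 1
        have : ((γ : E ≃ₗᵢ[ℝ] E) * ((γ⁻¹ : Γ) : E ≃ₗᵢ[ℝ] E)) (b j) = b j := by
          rw [← Subgroup.coe_mul, mul_inv_cancel]; simp
        simp only [Subgroup.coe_mul, LinearIsometryEquiv.coe_mul, Function.comp_apply] at this; exact this
      rw [this] at h0
      exact h0
    have : v ∈ (⋂ γ ∈ Γ, {v : E | γ v = v}) := by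
      simp only [Set.mem_iInter]
      intro γ hγ
      exact hfix ⟨γ, hγ⟩
    rw [hΓ] at this
    exact this
  -- Step 2: extract an independent spanning subset t ⊆ S
  obtain ⟨t, htS, htspan, htind⟩ := exists_linearIndependent ℝ S
  rw [hspan] at htspan
  have htfin : t.Finite := htind.setFinite
  have : Fintype t := htfin.fintype
  -- t is a basis, so card t = d
  have hcard : Fintype.card t = d := by
    have hb : Module.Basis t ℝ E := Module.Basis.mk htind (by rw [Subtype.range_coe, htspan])
    rw [← Module.finrank_eq_card_basis hb, finrank_euclideanSpace_fin]
  obtain ⟨e⟩ : Nonempty (Fin d ≃ t) := ⟨(Fintype.equivFinOfCardEq hcard).symm⟩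
  -- choose data
  have hchoice : ∀ i : Fin d, ∃ j : Fin d, ∃ γ : Γ,
      ((e i : E) = b j - (γ⁻¹ : Γ).1 (b j)) := fun i => htS (e i).2
  choose n μ hnμ using hchoice
  refine ⟨n, μ, ?_⟩
  apply Set.eq_singleton_iff_unique_mem.mpr
  constructor
  · simp [inner_zero_right]
  · intro v hv
    simp only [Set.mem_iInter, Set.mem_setOf_eq] at hv
    have hv' : v ∈ (Submodule.span ℝ t)ᗮ := by
      rw [Submodule.mem_orthogonal]
      intro u hu
      refine Submodule.span_induction (fun w hw => ?_) (by simp) ?_ ?_ hu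
      · obtain ⟨i, hi⟩ : ∃ i : Fin d, (e i : E) = w := ⟨e.symm ⟨w, hw⟩, by simp⟩
        rw [← hi, hnμ i]
        exact hv i
      · intro a c _ _ ha hc; rw [inner_add_left, ha, hc, add_zero]
      · intro r a _ ha; rw [inner_smul_left, ha, mul_zero]
    rw [htspan] at hv'
    simpa using hv'
end

section
/- In ℝ^3 the two rotations ρ_1 = (1/5)[[3,4,0],[-4,3,0],[0,0,5]] and ρ_2 = (1/5)[[5,0,0],[0,3,4],[0,-4,3]] generate a subgroup of SO(3) that is dense in SO(3). -/
open Matrix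

namespace RhoDense

open Real


noncomputable def Rz (t : ℝ) : Matrix (Fin 3) (Fin 3) ℝ :=
  !![Real.cos t, Real.sin t, 0; -Real.sin t, Real.cos t, 0; 0, 0, 1]

noncomputable def Rx (t : ℝ) : Matrix (Fin 3) (Fin 3) ℝ :=
  !![1, 0, 0; 0, Real.cos t, Real.sin t; 0, -Real.sin t, Real.cos t]

theorem Rz_add (s t : ℝ) : Rz (s + t) = Rz s * Rz t := by
  ext i j
  fin_cases i <;> fin_cases j <;>
    simp [Matrix.vecHead, Matrix.vecTail, Rz, Matrix.mul_apply, Fin.sum_univ_three,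
      Real.cos_add, Real.sin_add] <;> ring

theorem Rz_zero : Rz 0 = 1 := by
  ext i j; fin_cases i <;> fin_cases j <;>
    simp [Matrix.vecHead, Matrix.vecTail, Rz, Matrix.one_apply]

theorem Rz_transpose (t : ℝ) : (Rz t)ᵀ = Rz (-t) := by
  ext i j; fin_cases i <;> fin_cases j <;> simp [Matrix.vecHead, Matrix.vecTail, Rz]

theorem Rz_mul_transpose (t : ℝ) : Rz t * (Rz t)ᵀ = 1 := by
  rw [Rz_transpose, ← Rz_add]; simp [Rz_zero]

theorem Rz_transpose_mul (t : ℝ) : (Rz t)ᵀ * Rz t = 1 := by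
  rw [Rz_transpose, ← Rz_add]; simp [Rz_zero]

theorem Rx_add (s t : ℝ) : Rx (s + t) = Rx s * Rx t := by
  ext i j
  fin_cases i <;> fin_cases j <;>
    simp [Matrix.vecHead, Matrix.vecTail, Rx, Matrix.mul_apply, Fin.sum_univ_three,
      Real.cos_add, Real.sin_add] <;> ring

theorem Rx_zero : Rx 0 = 1 := by
  ext i j; fin_cases i <;> fin_cases j <;>
    simp [Matrix.vecHead, Matrix.vecTail, Rx, Matrix.one_apply]

theorem Rx_transpose (t : ℝ) : (Rx t)ᵀ = Rx (-t) := by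
  ext i j; fin_cases i <;> fin_cases j <;> simp [Matrix.vecHead, Matrix.vecTail, Rx]

theorem Rx_mul_transpose (t : ℝ) : Rx t * (Rx t)ᵀ = 1 := by
  rw [Rx_transpose, ← Rx_add]; simp [Rx_zero]

theorem Rx_transpose_mul (t : ℝ) : (Rx t)ᵀ * Rx t = 1 := by
  rw [Rx_transpose, ← Rx_add]; simp [Rx_zero]

theorem exists_cos_sin (a b : ℝ) (h : a ^ 2 + b ^ 2 = 1) :
    ∃ t : ℝ, Real.cos t = a ∧ Real.sin t = b := by
  have ha : -1 ≤ a ∧ a ≤ 1 := by constructor <;> nlinarith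
  have hs : Real.sin (Real.arccos a) = |b| := by
    rw [Real.sin_arccos, show (1 : ℝ) - a ^ 2 = b ^ 2 by linarith]
    exact Real.sqrt_sq_eq_abs b
  rcases le_or_gt 0 b with hb | hb
  · exact ⟨Real.arccos a, Real.cos_arccos ha.1 ha.2, by rw [hs, abs_of_nonneg hb]⟩
  · refine ⟨-Real.arccos a, ?_, ?_⟩
    · rw [Real.cos_neg]; exact Real.cos_arccos ha.1 ha.2
    · rw [Real.sin_neg, hs, abs_of_neg hb, neg_neg]

theorem Rz_det (t : ℝ) : (Rz t).det = 1 := by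
  simp [Matrix.vecHead, Matrix.vecTail, Rz, Matrix.det_fin_three]
  nlinarith [Real.sin_sq_add_cos_sq t]

theorem Rx_det (t : ℝ) : (Rx t).det = 1 := by
  simp [Matrix.vecHead, Matrix.vecTail, Rx, Matrix.det_fin_three]
  nlinarith [Real.sin_sq_add_cos_sq t]

set_option maxHeartbeats 1000000 in
theorem euler_decomposition (A : Matrix (Fin 3) (Fin 3) ℝ)
    (hO : A * Aᵀ = 1) (hO' : Aᵀ * A = 1) (hdet : A.det = 1) :
    ∃ α β γ : ℝ, A = Rz α * Rx β * Rz γ := by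
  -- column 3 is a unit vector
  have hcolunit : A 0 2 ^ 2 + A 1 2 ^ 2 + A 2 2 ^ 2 = 1 := by
    have := congrFun (congrFun hO' 2) 2
    simp only [Matrix.mul_apply, Fin.sum_univ_three, Matrix.transpose_apply,
      Matrix.one_apply_eq] at this
    nlinarith [this]
  obtain ⟨β, hβ⟩ : ∃ b : ℝ, b = Real.arccos (A 2 2) := ⟨_, rfl⟩
  have hz1 : -1 ≤ A 2 2 ∧ A 2 2 ≤ 1 := by constructor <;> nlinarith
  have hcosβ : Real.cos β = A 2 2 := by rw [hβ]; exact Real.cos_arccos hz1.1 hz1.2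
  have hsinβ_sq : Real.sin β ^ 2 = A 0 2 ^ 2 + A 1 2 ^ 2 := by
    have := Real.sin_sq_add_cos_sq β
    rw [hcosβ] at this; nlinarith
  -- choose α
  obtain ⟨α, hα1, hα2⟩ : ∃ α : ℝ, Real.sin α * Real.sin β = A 0 2 ∧
      Real.cos α * Real.sin β = A 1 2 := by
    rcases eq_or_ne (Real.sin β) 0 with hs0 | hs0
    · have h02 : A 0 2 = 0 := by nlinarith [hsinβ_sq]
      have h12 : A 1 2 = 0 := by nlinarith [hsinβ_sq]
      exact ⟨0, by rw [hs0, h02, mul_zero], by rw [hs0, h12, mul_zero]⟩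
    · have hssq : (A 1 2 / Real.sin β) ^ 2 + (A 0 2 / Real.sin β) ^ 2 = 1 := by
        field_simp
        linarith [hsinβ_sq]
      obtain ⟨α, h1, h2⟩ := exists_cos_sin _ _ hssq
      refine ⟨α, ?_, ?_⟩
      · rw [h2]; field_simp
      · rw [h1]; field_simp
  obtain ⟨M, hM⟩ : ∃ M, M = Rz α * Rx β := ⟨_, rfl⟩
  have hMMt : M * Mᵀ = 1 := by
    rw [hM, Matrix.transpose_mul, show Rz α * Rx β * ((Rx β)ᵀ * (Rz α)ᵀ)
      = Rz α * (Rx β * (Rx β)ᵀ) * (Rz α)ᵀ by noncomm_ring,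
      Rx_mul_transpose, mul_one, Rz_mul_transpose]
  have hMtM : Mᵀ * M = 1 := by
    rw [hM, Matrix.transpose_mul, show (Rx β)ᵀ * (Rz α)ᵀ * (Rz α * Rx β)
      = (Rx β)ᵀ * ((Rz α)ᵀ * Rz α) * Rx β by noncomm_ring,
      Rz_transpose_mul, mul_one, Rx_transpose_mul]
  have hM02 : M 0 2 = A 0 2 := by
    rw [hM, ← hα1]
    simp [Rz, Rx, Matrix.mul_apply, Fin.sum_univ_three, Matrix.vecHead, Matrix.vecTail]
  have hM12 : M 1 2 = A 1 2 := by
    rw [hM, ← hα2]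
    simp [Rz, Rx, Matrix.mul_apply, Fin.sum_univ_three, Matrix.vecHead, Matrix.vecTail]
  have hM22 : M 2 2 = A 2 2 := by
    rw [hM, ← hcosβ]
    simp [Rz, Rx, Matrix.mul_apply, Fin.sum_univ_three, Matrix.vecHead, Matrix.vecTail]
  obtain ⟨C, hC⟩ : ∃ C, C = Mᵀ * A := ⟨_, rfl⟩
  have hCcol : ∀ i : Fin 3, C i 2 = (1 : Matrix (Fin 3) (Fin 3) ℝ) i 2 := by
    intro i
    have h1 : C i 2 = (Mᵀ * M) i 2 := by
      simp only [hC, Matrix.mul_apply, Fin.sum_univ_three, Matrix.transpose_apply,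
        ← hM02, ← hM12, ← hM22]
    rw [h1, hMtM]
  have hC02 : C 0 2 = 0 := by simpa [Matrix.one_apply] using hCcol 0
  have hC12 : C 1 2 = 0 := by simpa [Matrix.one_apply] using hCcol 1
  have hC22 : C 2 2 = 1 := by simpa [Matrix.one_apply] using hCcol 2
  have hCCt : C * Cᵀ = 1 := by
    rw [hC, Matrix.transpose_mul, Matrix.transpose_transpose,
      show Mᵀ * A * (Aᵀ * M) = Mᵀ * (A * Aᵀ) * M by noncomm_ring, hO, mul_one, hMtM]
  have hrow2 : C 2 0 ^ 2 + C 2 1 ^ 2 + C 2 2 ^ 2 = 1 := by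
    have := congrFun (congrFun hCCt 2) 2
    simp only [Matrix.mul_apply, Fin.sum_univ_three, Matrix.transpose_apply,
      Matrix.one_apply_eq] at this
    nlinarith [this]
  have hC20 : C 2 0 = 0 := by nlinarith [hrow2, hC22]
  have hC21 : C 2 1 = 0 := by nlinarith [hrow2, hC22]
  have hrow0 : C 0 0 ^ 2 + C 0 1 ^ 2 = 1 := by
    have := congrFun (congrFun hCCt 0) 0
    simp only [Matrix.mul_apply, Fin.sum_univ_three, Matrix.transpose_apply,
      Matrix.one_apply_eq] at this
    nlinarith [this, hC02]
  have horth : C 0 0 * C 1 0 + C 0 1 * C 1 1 = 0 := by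
    have := congrFun (congrFun hCCt 0) 1
    simp only [Matrix.mul_apply, Fin.sum_univ_three, Matrix.transpose_apply] at this
    rw [Matrix.one_apply] at this
    simp at this
    nlinarith [this, hC02, hC12]
  have hdetC : C.det = 1 := by
    rw [hC, Matrix.det_mul, Matrix.det_transpose, hdet, mul_one, hM, Matrix.det_mul,
      Rz_det, Rx_det, mul_one]
  have hkey : C 0 0 * C 1 1 - C 0 1 * C 1 0 = 1 := by
    rw [Matrix.det_fin_three] at hdetC
    rw [hC02, hC12, hC20, hC21, hC22] at hdetC
    linarith [hdetC]
  have hd : C 1 0 = -(C 0 1) := by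
    linear_combination C 0 0 * horth - C 0 1 * hkey - C 1 0 * hrow0
  have he : C 1 1 = C 0 0 := by
    linear_combination C 0 1 * horth + C 0 0 * hkey - C 1 1 * hrow0
  obtain ⟨γ, hγ1, hγ2⟩ := exists_cos_sin (C 0 0) (C 0 1) hrow0
  have hCRz : C = Rz γ := by
    ext i j
    fin_cases i <;> fin_cases j <;>
      simp [Matrix.vecHead, Matrix.vecTail, Rz, hγ1, hγ2, hC02, hC12, hC20, hC21, hC22, hd, he]
  refine ⟨α, β, γ, ?_⟩
  rw [← hCRz, hC, ← hM, show M * (Mᵀ * A) = M * Mᵀ * A by noncomm_ring, hMMt, one_mul]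



theorem gauss_pow (n : ℕ) (hn : 1 ≤ n) :
    ∃ w : GaussianInt, (⟨3, 4⟩ : GaussianInt) ^ n = ⟨3, 4⟩ + 5 * w := by
  induction n, hn using Nat.le_induction with
  | base => exact ⟨0, by ring⟩
  | succ n hn ih =>
    obtain ⟨w, hw⟩ := ih
    refine ⟨⟨-2, 4⟩ + w * ⟨3, 4⟩, ?_⟩
    have hsq : (⟨3, 4⟩ : GaussianInt) ^ 2 = ⟨3, 4⟩ + 5 * ⟨-2, 4⟩ := by
      ext <;> simp [pow_two, Zsqrtd.re_mul, Zsqrtd.im_mul] 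
    calc (⟨3, 4⟩ : GaussianInt) ^ (n + 1) = (⟨3, 4⟩ : GaussianInt) ^ n * ⟨3, 4⟩ := pow_succ _ _
      _ = (⟨3, 4⟩ + 5 * w) * ⟨3, 4⟩ := by rw [hw]
      _ = (⟨3, 4⟩ : GaussianInt) ^ 2 + 5 * (w * ⟨3, 4⟩) := by ring
      _ = ⟨3, 4⟩ + 5 * (⟨-2, 4⟩ + w * ⟨3, 4⟩) := by rw [hsq]; ring

theorem complex_pow_ne_one (n : ℕ) (hn : 0 < n) :
    ((3 + 4 * Complex.I) / 5) ^ n ≠ 1 := by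
  intro h
  have h5 : ((5 : ℂ)) ^ n ≠ 0 := pow_ne_zero _ (by norm_num)
  have hpow : (3 + 4 * Complex.I) ^ n = 5 ^ n := by
    rw [div_pow, div_eq_one_iff_eq h5] at h
    exact h
  have hg : ((⟨3, 4⟩ : GaussianInt) : ℂ) = 3 + 4 * Complex.I := by
    simp [GaussianInt.toComplex_def]
  have hgi : ((⟨3, 4⟩ : GaussianInt) ^ n : GaussianInt) = (5 : GaussianInt) ^ n := by
    rw [← GaussianInt.toComplex_inj, map_pow, map_pow, hg, hpow]
    norm_num
    have : GaussianInt.toComplex 5 = 5 := by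
      simp [GaussianInt.toComplex_def, Zsqrtd.ext_iff]
    rw [this]
  obtain ⟨w, hw⟩ := gauss_pow n hn
  have him : ((5 : GaussianInt) ^ n).im = 0 := by
    have h5 : ((5 : GaussianInt)) ^ n = ((5 ^ n : ℤ) : GaussianInt) := by push_cast; ring
    rw [h5, Zsqrtd.im_intCast]
  rw [hgi] at hw
  have : (0 : ℤ) = 4 + 5 * w.im := by
    have := congrArg Zsqrtd.im hw
    simpa [him, Zsqrtd.im_mul] using this
  omega



theorem cos_theta0 : Real.cos (Real.arccos (3/5)) = 3/5 :=
  Real.cos_arccos (by norm_num) (by norm_num)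

theorem sin_theta0 : Real.sin (Real.arccos (3/5)) = 4/5 := by
  rw [Real.sin_arccos, show (1 : ℝ) - (3/5)^2 = (4/5)^2 by norm_num]
  rw [Real.sqrt_sq (by norm_num)]

theorem key_irrat (m k : ℤ) (hk : k ≠ 0) :
    (k : ℝ) * Real.arccos (3/5) ≠ m * (2 * Real.pi) := by
  intro h
  set θ := Real.arccos (3/5) with hθ
  have hexp : Complex.exp (θ * Complex.I) = (3 + 4 * Complex.I) / 5 := by
    rw [Complex.exp_mul_I, ← Complex.ofReal_cos, ← Complex.ofReal_sin, cos_theta0, sin_theta0]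
    push_cast
    ring
  have hu : Complex.exp (θ * Complex.I) ^ k = 1 := by
    rw [← Complex.exp_int_mul]
    have : (k : ℂ) * (θ * Complex.I) = (m : ℂ) * (2 * Real.pi * Complex.I) := by
      push_cast
      rw [show ((k:ℂ) * (θ * Complex.I)) = ((k:ℝ) * θ : ℝ) * Complex.I by push_cast; ring, h]
      push_cast; ring
    rw [this, Complex.exp_int_mul, Complex.exp_two_pi_mul_I, _root_.one_zpow]
  rw [hexp] at hu
  have hnat : ((3 + 4 * Complex.I) / 5) ^ (k.natAbs) = 1 := by
    rcases Int.natAbs_eq k with he | he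
    · rw [← zpow_natCast, ← he, hu]
    · rw [← zpow_natCast, show ((k.natAbs : ℤ)) = -k by omega, _root_.zpow_neg, hu, inv_one]
  exact complex_pow_ne_one _ (Int.natAbs_pos.mpr hk) hnat


theorem dense_rot (R : ℝ → Matrix (Fin 3) (Fin 3) ℝ)
    (hadd : ∀ s t, R (s + t) = R s * R t) (h0 : R 0 = 1)
    (htr : ∀ t, (R t)ᵀ = R (-t)) (hcont : Continuous R)
    (h2pi : R (2 * Real.pi) = 1)
    (K : Set (Matrix (Fin 3) (Fin 3) ℝ)) (hKc : IsClosed K)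
    (hK1 : (1 : Matrix (Fin 3) (Fin 3) ℝ) ∈ K)
    (hKmul : ∀ x ∈ K, ∀ y ∈ K, x * y ∈ K)
    (hKtr : ∀ x ∈ K, xᵀ ∈ K)
    (hθ : R (Real.arccos (3/5)) ∈ K) : ∀ t, R t ∈ K := by
  set T : AddSubgroup ℝ :=
    { carrier := {t | R t ∈ K}
      zero_mem' := by simpa [h0] using hK1
      add_mem' := by
        intro a b ha hb
        simp only [Set.mem_setOf_eq] at *
        rw [hadd]
        exact hKmul _ ha _ hb
      neg_mem' := by
        intro a ha
        simp only [Set.mem_setOf_eq] at *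
        rw [← htr]
        exact hKtr _ ha } with hT
  have hTclosed : IsClosed (T : Set ℝ) := hKc.preimage hcont
  have hθT : Real.arccos (3/5) ∈ T := hθ
  have h2πT : (2 * Real.pi) ∈ T := by show R _ ∈ K; rw [h2pi]; exact hK1
  rcases AddSubgroup.dense_or_cyclic T with hdense | ⟨a, ha⟩
  · have : (T : Set ℝ) = Set.univ := by
      rw [← hTclosed.closure_eq, hdense.closure_eq]
    intro t
    have : t ∈ (T : Set ℝ) := this ▸ Set.mem_univ t
    exact this
  · exfalso
    rw [ha, AddSubgroup.mem_closure_singleton] at hθT h2πT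
    obtain ⟨m, hm⟩ := hθT
    obtain ⟨n, hn⟩ := h2πT
    have hn0 : n ≠ 0 := by
      rintro rfl
      simp at hn
    refine key_irrat m n hn0 ?_
    have : (n : ℝ) * (m • a) = m * (n • a) := by
      rw [zsmul_eq_mul, zsmul_eq_mul]
      ring
    rw [hm] at this
    rw [hn] at this
    exact this



theorem Rz_continuous : Continuous Rz := by
  apply continuous_matrix
  intro i j
  fin_cases i <;> fin_cases j <;> simp [Matrix.vecHead, Matrix.vecTail, Rz] <;> fun_prop

theorem Rz_two_pi : Rz (2 * Real.pi) = 1 := by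
  ext i j
  fin_cases i <;> fin_cases j <;>
    simp [Matrix.vecHead, Matrix.vecTail, Rz, Matrix.one_apply, Real.cos_two_pi, Real.sin_two_pi]

theorem Rx_continuous : Continuous Rx := by
  apply continuous_matrix
  intro i j
  fin_cases i <;> fin_cases j <;> simp [Matrix.vecHead, Matrix.vecTail, Rx] <;> fun_prop

theorem Rx_two_pi : Rx (2 * Real.pi) = 1 := by
  ext i j
  fin_cases i <;> fin_cases j <;>
    simp [Matrix.vecHead, Matrix.vecTail, Rx, Matrix.one_apply, Real.cos_two_pi, Real.sin_two_pi]

theorem star_real (A : Matrix (Fin 3) (Fin 3) ℝ) : star A = Aᵀ := by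
  ext i j
  simp [Matrix.star_apply]





end RhoDense

open RhoDense Real in
/-- The rotations `ρ_1 = (1/5)[[3,4,0],[-4,3,0],[0,0,5]]` and
`ρ_2 = (1/5)[[5,0,0],[0,3,4],[0,-4,3]]` generate a dense subgroup of `SO(3)`:
every special orthogonal `3×3` matrix lies in the topological closure of the subgroup of
the orthogonal group generated by `ρ_1` and `ρ_2` (whose elements all have determinant
`1`, so this closure is contained in `SO(3)`). -/
theorem rho1_rho2_generate_dense_subgroup_of_SO3
    (ρ1 ρ2 : Matrix.orthogonalGroup (Fin 3) ℝ)
    (h1 : (ρ1 : Matrix (Fin 3) (Fin 3) ℝ) =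
      (1/5 : ℝ) • !![(3 : ℝ), 4, 0; -4, 3, 0; 0, 0, 5])
    (h2 : (ρ2 : Matrix (Fin 3) (Fin 3) ℝ) =
      (1/5 : ℝ) • !![(5 : ℝ), 0, 0; 0, 3, 4; 0, -4, 3]) :
    ∀ A : Matrix (Fin 3) (Fin 3) ℝ, A ∈ Matrix.specialOrthogonalGroup (Fin 3) ℝ →
      A ∈ closure ((fun g : Matrix.orthogonalGroup (Fin 3) ℝ =>
        (g : Matrix (Fin 3) (Fin 3) ℝ)) '' (Subgroup.closure {ρ1, ρ2})) := by
  intro A hA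
  set G := Subgroup.closure {ρ1, ρ2} with hG
  set setS : Set (Matrix (Fin 3) (Fin 3) ℝ) :=
    (fun g : Matrix.orthogonalGroup (Fin 3) ℝ =>
      (g : Matrix (Fin 3) (Fin 3) ℝ)) '' (G : Set (Matrix.orthogonalGroup (Fin 3) ℝ)) with hsetS
  -- the submonoid structure
  have hone : (1 : Matrix (Fin 3) (Fin 3) ℝ) ∈ setS := ⟨1, Subgroup.one_mem G, rfl⟩
  have hmulS : ∀ x ∈ setS, ∀ y ∈ setS, x * y ∈ setS := by
    rintro x ⟨g, hg, rfl⟩ y ⟨h, hh, rfl⟩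
    exact ⟨g * h, G.mul_mem hg hh, rfl⟩
  have htrS : ∀ x ∈ setS, xᵀ ∈ setS := by
    rintro x ⟨g, hg, rfl⟩
    refine ⟨g⁻¹, G.inv_mem hg, ?_⟩
    show ((g⁻¹ : Matrix.orthogonalGroup (Fin 3) ℝ) : Matrix (Fin 3) (Fin 3) ℝ)
      = ((g : Matrix (Fin 3) (Fin 3) ℝ))ᵀ
    rw [Matrix.UnitaryGroup.inv_val, star_real]
  set K := closure setS with hK
  have hKc : IsClosed K := isClosed_closure
  have hK1 : (1 : Matrix (Fin 3) (Fin 3) ℝ) ∈ K := subset_closure hone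
  have hKmul : ∀ x ∈ K, ∀ y ∈ K, x * y ∈ K := by
    set Smon : Submonoid (Matrix (Fin 3) (Fin 3) ℝ) :=
      { carrier := setS, one_mem' := hone, mul_mem' := fun ha hb => hmulS _ ha _ hb }
    intro x hx y hy
    exact Smon.topologicalClosure.mul_mem hx hy
  have hKtr : ∀ x ∈ K, xᵀ ∈ K := by
    intro x hx
    have h1' : xᵀ ∈ (fun M : Matrix (Fin 3) (Fin 3) ℝ => Mᵀ) '' K := ⟨x, hx, rfl⟩
    have h2' : (fun M : Matrix (Fin 3) (Fin 3) ℝ => Mᵀ) '' K ⊆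
        closure ((fun M : Matrix (Fin 3) (Fin 3) ℝ => Mᵀ) '' setS) :=
      image_closure_subset_closure_image (Continuous.matrix_transpose continuous_id)
    have h3' : (fun M : Matrix (Fin 3) (Fin 3) ℝ => Mᵀ) '' setS ⊆ setS := by
      rintro y ⟨m, hm, rfl⟩
      exact htrS m hm
    exact closure_mono h3' (h2' h1')
  -- ρ1 = Rz θ₀, ρ2 = Rx θ₀
  have hρ1 : (ρ1 : Matrix (Fin 3) (Fin 3) ℝ) = Rz (Real.arccos (3/5)) := by
    rw [h1]
    ext i j
    fin_cases i <;> fin_cases j <;>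
      simp [Matrix.vecHead, Matrix.vecTail, Rz, cos_theta0, sin_theta0] <;> norm_num
  have hρ2 : (ρ2 : Matrix (Fin 3) (Fin 3) ℝ) = Rx (Real.arccos (3/5)) := by
    rw [h2]
    ext i j
    fin_cases i <;> fin_cases j <;>
      simp [Matrix.vecHead, Matrix.vecTail, Rx, cos_theta0, sin_theta0] <;> norm_num
  have hRzθ : Rz (Real.arccos (3/5)) ∈ K := by
    rw [← hρ1]
    exact subset_closure ⟨ρ1, Subgroup.subset_closure (by simp), rfl⟩
  have hRxθ : Rx (Real.arccos (3/5)) ∈ K := by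
    rw [← hρ2]
    exact subset_closure ⟨ρ2, Subgroup.subset_closure (by simp), rfl⟩
  

  have hAort := Matrix.mem_specialOrthogonalGroup_iff.mp hA
  have hdet : A.det = 1 := hAort.2
  have hAAt : A * Aᵀ = 1 := by
    have := (Matrix.mem_orthogonalGroup_iff (Fin 3) ℝ).mp hAort.1
    exact this
  have hAtA : Aᵀ * A = 1 := by
    have := (Matrix.mem_orthogonalGroup_iff' (Fin 3) ℝ).mp hAort.1
    exact this
  obtain ⟨α, β, γ, hE⟩ := euler_decomposition A hAAt hAtA hdet
  have hz : ∀ t, Rz t ∈ K := dense_rot Rz Rz_add Rz_zero Rz_transpose Rz_continuous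
    Rz_two_pi K hKc hK1 hKmul hKtr hRzθ
  have hx : ∀ t, Rx t ∈ K := dense_rot Rx Rx_add Rx_zero Rx_transpose Rx_continuous
    Rx_two_pi K hKc hK1 hKmul hKtr hRxθ
  rw [hE]
  exact hKmul _ (hKmul _ (hz α) _ (hx β)) _ (hz γ)
end

section
/- Let Γ ≤ O(2) and let (G,φ) be a Γ-gain graph such that the Γ-gain graph (G',φ') obtained by a gained 0-extension (adding vertex v0 and two gained edges to existing vertices) satisfies: if (G,φ) is Γ-symmetrically rigid in ℝ^2 then so is (G',φ'). Then for any multigraph 0-extension G' of G (even when the two new edges are parallel), provided |Γ| ≥ 2, there exists an extension φ' of φ to G' making (G',φ') Γ-symmetrically rigid; in particular one can take both new edge gains trivial when the new edges are not parallel, and gains 1 and γ (γ ≠ 1) when they are parallel. -/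
open Matrix

/-- The orthogonal matrix underlying an element of a point group `Γ ≤ O(d)`. -/
noncomputable def gmat {d : ℕ} {Γ : Subgroup (Matrix.orthogonalGroup (Fin d) ℝ)}
    (γ : Γ) : Matrix (Fin d) (Fin d) ℝ :=
  ((γ : Matrix.orthogonalGroup (Fin d) ℝ) : Matrix (Fin d) (Fin d) ℝ)

/-- `gain` is a valid `Γ`-gain map on the multigraph with oriented edges `src e → tgt e`:
loops carry nontrivial gains, and parallel edges (in either relative orientation) carry
distinct gains. -/
def IsGainMap {d : ℕ} {Γ : Subgroup (Matrix.orthogonalGroup (Fin d) ℝ)} {V E : Type}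
    (src tgt : E → V) (gain : E → Γ) : Prop :=
  (∀ e, src e = tgt e → gain e ≠ 1) ∧
  (∀ e e', e ≠ e' → src e = src e' → tgt e = tgt e' → gain e ≠ gain e') ∧
  (∀ e e', e ≠ e' → src e = tgt e' → tgt e = src e' → gain e ≠ (gain e')⁻¹)

/-- `u` is a `Γ`-symmetric infinitesimal flex of the orbit framework `(G, φ, p)`:
it lies in the kernel of the orbit rigidity matrix.  (The uniform formula below
specialises to the loop row `⟨2p(v) - γ p(v) - γ⁻¹ p(v), u(v)⟩ = 0` when
`src e = tgt e`.) -/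
def IsSymFlex {d : ℕ} {Γ : Subgroup (Matrix.orthogonalGroup (Fin d) ℝ)} {V E : Type}
    (src tgt : E → V) (gain : E → Γ) (p u : V → (Fin d → ℝ)) : Prop :=
  ∀ e : E,
    (p (src e) - (gmat (gain e)).mulVec (p (tgt e))) ⬝ᵥ u (src e) +
      (p (tgt e) - (gmat (gain e)⁻¹).mulVec (p (src e))) ⬝ᵥ u (tgt e) = 0

/-- A `Γ`-symmetric flex is trivial if it extends to a trivial flex `x ↦ Tx + c`
(`T` skew-symmetric) of the whole `Γ`-symmetric covering framework. -/
def IsTrivialFlex {d : ℕ} (Γ : Subgroup (Matrix.orthogonalGroup (Fin d) ℝ)) {V : Type}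
    (p u : V → (Fin d → ℝ)) : Prop :=
  ∃ (T : Matrix (Fin d) (Fin d) ℝ) (x : Fin d → ℝ),
    Tᵀ = -T ∧ (∀ v, u v = T.mulVec (p v) + x) ∧
    (∀ v, ∀ γ : Γ, (gmat γ).mulVec (u v) = T.mulVec ((gmat γ).mulVec (p v)) + x)

/-- A gain graph is `Γ`-symmetrically rigid if it admits an orbit placement for which
every `Γ`-symmetric flex is trivial. -/
def SymRigid {d : ℕ} (Γ : Subgroup (Matrix.orthogonalGroup (Fin d) ℝ)) {V E : Type}
    (src tgt : E → V) (gain : E → Γ) : Prop :=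
  ∃ p : V → (Fin d → ℝ),
    ∀ u : V → (Fin d → ℝ), IsSymFlex src tgt gain p u → IsTrivialFlex Γ p u

/-- Suppose `Γ ≤ O(2)` with `|Γ| ≥ 2`, and `(G, φ)` (given by `src`, `tgt`, `gain`) is a
`Γ`-symmetrically rigid gain graph such that every gained 0-extension of `(G, φ)`
preserves `Γ`-symmetric rigidity in `ℝ²` (the hypothesis `hlemma`).  Then for any
multigraph 0-extension `G'` of `G` (new vertex `none`, two new edges to the old
vertices `v1, v2`, possibly parallel), there exists an extension `gain'` of `gain`
making `(G', φ')` a `Γ`-symmetrically rigid gain graph; moreover one can take both new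
gains trivial when `v1 ≠ v2`, and gains `1` and `γ ≠ 1` when `v1 = v2`. -/
theorem gained_zero_extension_exists_rigid_gains
    (Γ : Subgroup (Matrix.orthogonalGroup (Fin 2) ℝ))
    (hΓ : 2 ≤ Nat.card Γ)
    {V E : Type} [Fintype V] [Fintype E]
    (src tgt : E → V) (gain : E → Γ)
    (hgain : IsGainMap src tgt gain)
    (v1 v2 : V)
    (hlemma : ∀ gain' : (E ⊕ Fin 2) → Γ,
      IsGainMap (Sum.elim (fun e => some (src e)) (fun _ => (none : Option V)))
        (Sum.elim (fun e => some (tgt e)) (fun i => if i = 0 then some v1 else some v2))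
        gain' →
      (∀ e : E, gain' (Sum.inl e) = gain e) →
      SymRigid Γ src tgt gain →
      SymRigid Γ
        (Sum.elim (fun e => some (src e)) (fun _ => (none : Option V)))
        (Sum.elim (fun e => some (tgt e)) (fun i => if i = 0 then some v1 else some v2))
        gain')
    (hrigid : SymRigid Γ src tgt gain) :
    ∃ gain' : (E ⊕ Fin 2) → Γ,
      IsGainMap (Sum.elim (fun e => some (src e)) (fun _ => (none : Option V)))
        (Sum.elim (fun e => some (tgt e)) (fun i => if i = 0 then some v1 else some v2))
        gain' ∧
      (∀ e : E, gain' (Sum.inl e) = gain e) ∧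
      SymRigid Γ
        (Sum.elim (fun e => some (src e)) (fun _ => (none : Option V)))
        (Sum.elim (fun e => some (tgt e)) (fun i => if i = 0 then some v1 else some v2))
        gain' ∧
      (v1 ≠ v2 → gain' (Sum.inr 0) = 1 ∧ gain' (Sum.inr 1) = 1) ∧
      (v1 = v2 → gain' (Sum.inr 0) = 1 ∧ gain' (Sum.inr 1) ≠ 1) := by
  classical
  obtain ⟨h1, h2, h3⟩ := hgain
  obtain ⟨γ, hγ⟩ : ∃ γ : Γ, γ ≠ 1 := by
    have hfin : Finite Γ := Nat.finite_of_card_ne_zero (by omega)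
    have : Nontrivial Γ := Finite.one_lt_card_iff_nontrivial.mp (by omega)
    exact exists_ne 1
  set g2 : Γ := if v1 = v2 then γ else 1 with hg2
  have hmap : IsGainMap
      (Sum.elim (fun e => some (src e)) (fun _ : Fin 2 => (none : Option V)))
      (Sum.elim (fun e => some (tgt e)) (fun i : Fin 2 => if i = 0 then some v1 else some v2))
      (Sum.elim gain (fun i : Fin 2 => if i = 0 then 1 else g2)) := by
    refine ⟨?_, ?_, ?_⟩
    · rintro (e | i) he
      · exact h1 e (Option.some_injective _ he)
      · simp only [Sum.elim_inr] at he
        split at he <;> exact (Option.some_ne_none _ he.symm).elim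
    · rintro (e | i) (e' | j) hne hs ht
      · exact h2 e e' (by simpa using hne) (Option.some_injective _ hs)
          (Option.some_injective _ ht)
      · simp at hs
      · simp at hs
      · have hij : i ≠ j := by simpa using hne
        simp only [Sum.elim_inr] at ht ⊢
        have hv : v1 = v2 := by
          fin_cases i <;> fin_cases j <;> simp_all
        have hg : g2 = γ := by rw [hg2, if_pos hv]
        fin_cases i <;> fin_cases j <;> simp_all [hg]
        all_goals exact fun h => hγ h.symm
    · rintro (e | i) (e' | j) hne hs ht
      · exact h3 e e' (by simpa using hne) (Option.some_injective _ hs)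
          (Option.some_injective _ ht)
      · simp at ht
      · simp at hs
      · simp only [Sum.elim_inr] at hs
        split at hs <;> exact (Option.some_ne_none _ hs.symm).elim
  refine ⟨Sum.elim gain (fun i : Fin 2 => if i = 0 then 1 else g2), hmap, fun e => rfl,
    hlemma _ hmap (fun e => rfl) hrigid, ?_, ?_⟩
  · intro hv; simp [hg2, hv]
  · intro hv; simp [hg2, hv, hγ]
end
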